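/- Let t ≥ 1 and d ≥ 3, and let G be a finite tree of maximum degree at most d. Then the distance-t chromatic index of G is at most τ'_t(d), where τ'_t(d) = (2(d-1)^{t/2+1} - d)/(d-2) if t is even and τ'_t(d) = (d(d-1)^{(t+1)/2} - d)/(d-2) if t is odd. -/

import Mathlib

open SimpleGraph

/-- A distance-`t` edge-colouring with `n` colours: distinct edges at distance at most `t-1`
in the line graph (equivalently, joined by a path of fewer than `t` edges) get distinct
colours. -/
def DistEdgeColorable {V : Type*} (G : SimpleGraph V) (t n : ℕ) : Prop :=
  ∃ c : G.edgeSet → Fin n, ∀ e f : G.edgeSet, e ≠ f →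
    G.lineGraph.edist e f ≤ (↑(t - 1) : ℕ∞) → c e ≠ c f

/-- `τ'_t(d)`. -/
def tau' (t d : ℕ) : ℕ :=
  if Even t then (2 * (d - 1) ^ (t / 2 + 1) - d) / (d - 2)
  else (d * (d - 1) ^ ((t + 1) / 2) - d) / (d - 2)

namespace DTC

variable {V : Type*} {G : SimpleGraph V} {r u v w y : V}

/-- depth of a vertex relative to root `r` -/
noncomputable def dep (G : SimpleGraph V) (r v : V) : ℕ := G.dist r v

lemma path_len (hG : G.IsTree) {a b : V} {p : G.Walk a b} (hp : p.IsPath) :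
    p.length = G.dist a b := by
  classical
  obtain ⟨q, hq, hql⟩ := hG.isConnected.exists_path_of_dist a b
  obtain ⟨u, _, huniq⟩ := hG.existsUnique_path a b
  rw [huniq p hp, ← huniq q hq, hql]

lemma dep_eq_zero_iff (hG : G.IsTree) : dep G r v = 0 ↔ v = r := by
  rw [dep, hG.isConnected.dist_eq_zero_iff, eq_comm]

lemma isPath_concat {a b c : V} {p : G.Walk a b} (hp : p.IsPath) (h : G.Adj b c)
    (hc : c ∉ p.support) : (p.concat h).IsPath := by
  rw [Walk.isPath_def, Walk.support_concat]
  rw [List.nodup_append]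
  exact ⟨hp.support_nodup, List.nodup_singleton c,
    by simpa [List.disjoint_right] using fun a (ha : a ∈ p.support) (h : a = c) => hc (h ▸ ha)⟩

lemma adj_dep (hG : G.IsTree) (h : G.Adj u v) :
    dep G r u + 1 = dep G r v ∨ dep G r v + 1 = dep G r u := by
  classical
  obtain ⟨p, hp, hl⟩ := hG.isConnected.exists_path_of_dist r u
  by_cases hv : v ∈ p.support
  · right
    have hvu : v ≠ u := h.ne'
    have h1 : (p.takeUntil v hv).length = G.dist r v := path_len hG (hp.takeUntil hv)
    have h2 : (p.takeUntil v hv).length + (p.dropUntil v hv).length = p.length := by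
      rw [← Walk.length_append, Walk.take_spec]
    have h3 : (p.dropUntil v hv).length ≠ 0 := by
      intro h0
      exact hvu (Walk.eq_of_length_eq_zero h0)
    have h4 : G.dist r u ≤ G.dist r v + 1 := by
      have := hG.isConnected.dist_triangle (u := r) (v := v) (w := u)
      rwa [dist_eq_one_iff_adj.mpr h.symm] at this
    simp only [dep]
    omega
  · left
    have hcp : (p.concat h).IsPath := isPath_concat hp h hv
    have := path_len hG hcp
    rw [Walk.length_concat, hl] at this
    simp only [dep]
    omega

lemma parent_exists (hG : G.IsTree) (hv : v ≠ r) :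
    ∃ u, G.Adj v u ∧ G.dist r u + 1 = G.dist r v := by
  obtain ⟨p, hp, hl⟩ := hG.isConnected.exists_path_of_dist r v
  have hlen : p.reverse.length = G.dist r v := by rw [Walk.length_reverse, hl]
  have hpos : 0 < G.dist r v := hG.isConnected.pos_dist_of_ne (Ne.symm hv)
  cases hq : p.reverse with
  | nil => rw [hq] at hlen; simp at hlen; simp at hpos
  | cons hadj q =>
    rename_i w
    refine ⟨w, hadj, ?_⟩
    have hqp : q.IsPath := by
      have := hp.reverse
      rw [hq] at this
      exact this.of_cons
    have : q.reverse.length = G.dist r w := path_len hG hqp.reverse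
    rw [Walk.length_reverse] at this
    rw [hq] at hlen
    simp only [Walk.length_cons] at hlen
    omega

/-- the parent of a vertex in the tree rooted at `r` -/
noncomputable def parent (G : SimpleGraph V) (r v : V) : V :=
  letI := Classical.dec (∃ u, G.Adj v u ∧ G.dist r u + 1 = G.dist r v)
  if h : ∃ u, G.Adj v u ∧ G.dist r u + 1 = G.dist r v then h.choose else r

lemma parent_spec (hG : G.IsTree) (hv : v ≠ r) :
    G.Adj v (parent G r v) ∧ dep G r (parent G r v) + 1 = dep G r v := by
  have h := parent_exists hG hv
  rw [parent]
  simp only [dif_pos h]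
  exact h.choose_spec

lemma adj_parent (hG : G.IsTree) (hv : v ≠ r) : G.Adj v (parent G r v) :=
  (parent_spec hG hv).1

lemma dep_parent (hG : G.IsTree) (hv : v ≠ r) :
    dep G r (parent G r v) + 1 = dep G r v :=
  (parent_spec hG hv).2

lemma parent_eq (hG : G.IsTree) (h : G.Adj v u) (hd : dep G r u + 1 = dep G r v) :
    u = parent G r v := by
  classical
  have hvr : v ≠ r := by
    intro hvr
    rw [hvr, dep_eq_zero_iff hG |>.mpr rfl] at hd
    · omega
  have hw := parent_spec hG hvr
  set w := parent G r v with hwdef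
  -- both u and w are neighbours of v with smaller depth; show u = w
  have key : ∀ z : V, G.Adj v z → dep G r z + 1 = dep G r v →
      ∃ (p : G.Walk r v), p.IsPath ∧ ∃ (q : G.Walk r z) (hq : G.Adj z v), q.IsPath ∧
        p = q.concat hq := by
    intro z hz hdz
    obtain ⟨q, hq, hql⟩ := hG.isConnected.exists_path_of_dist r z
    have hvq : v ∉ q.support := by
      intro hvq
      have h1 : (q.takeUntil v hvq).length = G.dist r v := path_len hG (hq.takeUntil hvq)
      have h2 : (q.takeUntil v hvq).length ≤ q.length := Walk.length_takeUntil_le q hvq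
      rw [hql] at h2
      simp only [dep] at hdz
      omega
    exact ⟨q.concat hz.symm, isPath_concat hq hz.symm hvq, q, hz.symm, hq, rfl⟩
  obtain ⟨p1, hp1, q1, hq1a, hq1p, hpq1⟩ := key u h hd
  obtain ⟨p2, hp2, q2, hq2a, hq2p, hpq2⟩ := key w hw.1 hw.2
  obtain ⟨x, _, huniq⟩ := hG.existsUnique_path r v
  have : p1 = p2 := by rw [huniq p1 hp1, huniq p2 hp2]
  rw [hpq1, hpq2] at this
  obtain ⟨hv', -⟩ := Walk.concat_inj this
  exact hv'


/-- `a`-fold ancestor -/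
noncomputable def anc (G : SimpleGraph V) (r : V) (a : ℕ) (v : V) : V :=
  (parent G r)^[a] v

@[simp] lemma anc_zero : anc G r 0 v = v := rfl

lemma anc_succ (a : ℕ) : anc G r (a + 1) v = anc G r a (parent G r v) :=
  Function.iterate_succ_apply _ _ _

lemma anc_succ' (a : ℕ) : anc G r (a + 1) v = parent G r (anc G r a v) :=
  Function.iterate_succ_apply' _ _ _

lemma dep_anc (hG : G.IsTree) :
    ∀ a, ∀ v : V, a ≤ dep G r v → dep G r (anc G r a v) + a = dep G r v := by
  intro a
  induction a with
  | zero => intro v _; simp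
  | succ a ih =>
    intro v ha
    have hvr : v ≠ r := by
      intro h
      rw [h, (dep_eq_zero_iff hG).mpr rfl] at ha
      omega
    have hp := dep_parent hG hvr
    rw [anc_succ]
    have := ih (parent G r v) (by omega)
    omega

lemma claimC (hG : G.IsTree) :
    ∀ (D : ℕ) (v y : V), G.dist v y = D →
      dep G r y = dep G r v + D ∨ (v ≠ r ∧ G.dist (parent G r v) y + 1 = D) := by
  intro D
  induction D with
  | zero =>
    intro v y h
    left
    have : v = y := (hG.isConnected.dist_eq_zero_iff).mp h
    rw [this]; simp [dep]
  | succ D ih =>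
    intro v y h
    obtain ⟨p, hpl⟩ := hG.isConnected.exists_walk_length_eq_dist v y
    rw [h] at hpl
    cases p with
    | nil => simp at hpl
    | cons hadj q =>
      rename_i w
      simp only [Walk.length_cons] at hpl
      have hq : G.dist w y = D := by
        have h1 : G.dist w y ≤ D := by
          have := SimpleGraph.dist_le q
          omega
        have h2 : G.dist v y ≤ G.dist v w + G.dist w y :=
          hG.isConnected.dist_triangle
        rw [dist_eq_one_iff_adj.mpr hadj] at h2
        omega
      rcases adj_dep (r := r) hG hadj with h1 | h2
      · -- dep v + 1 = dep w
        rcases ih w y hq with hL | ⟨hwr, hR⟩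
        · left; omega
        · exfalso
          have : v = parent G r w := parent_eq hG hadj.symm h1
          rw [← this] at hR
          omega
      · -- dep w + 1 = dep v
        right
        have hvr : v ≠ r := by
          intro hv
          rw [hv, (dep_eq_zero_iff hG).mpr rfl] at h2
          omega
        have : w = parent G r v := parent_eq hG hadj h2
        rw [← this]
        exact ⟨hvr, by omega⟩

lemma cover (hG : G.IsTree) :
    ∀ (D : ℕ) (v y : V), G.dist v y = D →
      ∃ a b, a + b = D ∧ a ≤ dep G r v ∧ dep G r y + a = dep G r v + b ∧
        G.dist (anc G r a v) y = b := by
  intro D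
  induction D with
  | zero =>
    intro v y h
    exact ⟨0, 0, rfl, Nat.zero_le _, by
      have : v = y := (hG.isConnected.dist_eq_zero_iff).mp h
      rw [this], by simpa using h⟩
  | succ D ih =>
    intro v y h
    rcases claimC (r := r) hG (D + 1) v y h with hL | ⟨hvr, hR⟩
    · exact ⟨0, D + 1, by omega, Nat.zero_le _, by omega, by simpa using h⟩
    · obtain ⟨a, b, hab, hadep, heq, hdist⟩ := ih (parent G r v) y (by omega)
      have hp := dep_parent hG hvr
      refine ⟨a + 1, b, by omega, by omega, by omega, ?_⟩
      rw [anc_succ]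
      exact hdist

lemma minimalMeet (hG : G.IsTree) {t : ℕ} (hne : y ≠ v) (hdep : dep G r y ≤ dep G r v)
    (hdist : G.dist v y ≤ t) :
    ∃ a b, 1 ≤ a ∧ a ≤ dep G r v ∧ b ≤ a ∧ a + b ≤ t ∧
      G.dist (anc G r a v) y = b ∧ dep G r y = dep G r (anc G r a v) + b ∧
      G.dist (anc G r (a - 1) v) y = b + 1 := by
  classical
  have hDpos : 0 < G.dist v y := hG.isConnected.pos_dist_of_ne (Ne.symm hne)
  obtain ⟨a₁, b₁, hab₁, ha₁, heq₁, hdist₁⟩ := cover (r := r) hG (G.dist v y) v y rfl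
  have ha₁pos : 0 < a₁ := by omega
  have hex : ∃ a : ℕ, 0 < a ∧ a ≤ dep G r v ∧
      dep G r y + a = dep G r v + G.dist (anc G r a v) y :=
    ⟨a₁, ha₁pos, ha₁, by rw [hdist₁]; omega⟩
  obtain ⟨a, ⟨hapos, hav, haeq⟩, hmin, hamin⟩ :
      ∃ a, (0 < a ∧ a ≤ dep G r v ∧
          dep G r y + a = dep G r v + G.dist (anc G r a v) y) ∧
        (∀ c, c < a → ¬(0 < c ∧ c ≤ dep G r v ∧
          dep G r y + c = dep G r v + G.dist (anc G r c v) y)) ∧ a ≤ a₁ :=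
    ⟨Nat.find hex, Nat.find_spec hex, fun c hc => Nat.find_min hex hc,
      Nat.find_min' hex ⟨ha₁pos, ha₁, by rw [hdist₁]; omega⟩⟩
  have hadepanc : dep G r (anc G r a v) + a = dep G r v := dep_anc hG a v hav
  refine ⟨a, G.dist (anc G r a v) y, hapos, hav, by omega, by omega, rfl, by omega, ?_⟩
  have hdepu : dep G r (anc G r (a - 1) v) + (a - 1) = dep G r v :=
    dep_anc hG (a - 1) v (by omega)
  have hur : anc G r (a - 1) v ≠ r := by
    intro h
    have h0 : dep G r (anc G r (a - 1) v) = 0 := by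
      rw [h]; exact (dep_eq_zero_iff hG).mpr rfl
    omega
  have hw : anc G r a v = parent G r (anc G r (a - 1) v) := by
    rw [← anc_succ']
    congr 1
    omega
  have hadj : G.Adj (anc G r (a - 1) v) (anc G r a v) := hw ▸ adj_parent hG hur
  have hdepw : dep G r (anc G r a v) + 1 = dep G r (anc G r (a - 1) v) := by
    rw [hw]; exact dep_parent hG hur
  have htri1 : G.dist (anc G r (a - 1) v) y ≤ G.dist (anc G r a v) y + 1 := by
    have h1 : G.dist (anc G r (a - 1) v) y ≤
        G.dist (anc G r (a - 1) v) (anc G r a v) + G.dist (anc G r a v) y :=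
      hG.isConnected.dist_triangle
    rw [dist_eq_one_iff_adj.mpr hadj] at h1
    omega
  have htri2 : G.dist (anc G r a v) y ≤ G.dist (anc G r (a - 1) v) y + 1 := by
    have h1 : G.dist (anc G r a v) y ≤
        G.dist (anc G r a v) (anc G r (a - 1) v) + G.dist (anc G r (a - 1) v) y :=
      hG.isConnected.dist_triangle
    rw [dist_eq_one_iff_adj.mpr hadj.symm] at h1
    omega
  -- exclude dist (anc (a-1)) y = dist (anc a) y   (parity, via cover)
  have hne2 : G.dist (anc G r (a - 1) v) y ≠ G.dist (anc G r a v) y := by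
    intro hDb
    obtain ⟨α, β, hαβ, _, heqc, _⟩ :=
      cover (r := r) hG (G.dist (anc G r (a - 1) v) y) (anc G r (a - 1) v) y rfl
    omega
  -- exclude dist (anc (a-1)) y + 1 = dist (anc a) y   (minimality)
  have hne3 : G.dist (anc G r (a - 1) v) y + 1 ≠ G.dist (anc G r a v) y := by
    intro hDb
    rcases Nat.eq_zero_or_pos (a - 1) with h0 | hpos
    · have huv : anc G r (a - 1) v = v := by rw [h0]; rfl
      rw [huv] at hDb
      -- dep y = dep v + dist v y with dep y ≤ dep v forces y = v
      have hvy : G.dist v y = 0 := by omega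
      omega
    · exact hmin (a - 1) (by omega) ⟨hpos, by omega, by omega⟩
  omega

section Count

variable [Fintype V] [DecidableEq V]

/-- vertices at "downhill" distance `b` below `w`, avoiding the branch through the
child `u` of `w` -/
noncomputable def Dset (G : SimpleGraph V) (r w u : V) (b : ℕ) [Fintype V] : Finset V :=
  (Set.toFinite {z : V | G.dist w z = b ∧ dep G r z = dep G r w + b ∧
    G.dist u z = b + 1}).toFinset

lemma mem_Dset {b : ℕ} {z : V} :
    z ∈ Dset G r w u b ↔
      G.dist w z = b ∧ dep G r z = dep G r w + b ∧ G.dist u z = b + 1 := by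
  rw [Dset, Set.Finite.mem_toFinset, Set.mem_setOf_eq]

lemma card_Dset_zero (hG : G.IsTree) (w u : V) : (Dset G r w u 0).card ≤ 1 := by
  classical
  have : Dset G r w u 0 ⊆ {w} := by
    intro z hz
    rw [mem_Dset] at hz
    rw [Finset.mem_singleton]
    exact ((hG.isConnected.dist_eq_zero_iff).mp hz.1).symm
  calc (Dset G r w u 0).card ≤ ({w} : Finset V).card := Finset.card_le_card this
    _ = 1 := Finset.card_singleton w

variable [DecidableRel G.Adj]

lemma card_Dset_one (hG : G.IsTree) {d : ℕ} (hdeg : ∀ x : V, G.degree x ≤ d)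
    (hadj : G.Adj u w) (hdp : dep G r w + 1 = dep G r u) :
    (Dset G r w u 1).card ≤ if w = r then d - 1 else d - 2 := by
  classical
  have hsub : Dset G r w u 1 ⊆ (G.neighborFinset w).erase u := by
    intro z hz
    rw [mem_Dset] at hz
    rw [Finset.mem_erase, mem_neighborFinset]
    refine ⟨?_, dist_eq_one_iff_adj.mp hz.1⟩
    intro h
    rw [h] at hz
    have := hz.2.2
    simp [SimpleGraph.dist_self] at this
  have hm : u ∈ G.neighborFinset w := by rw [mem_neighborFinset]; exact hadj.symm
  by_cases hw : w = r
  · rw [if_pos hw]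
    calc (Dset G r w u 1).card ≤ ((G.neighborFinset w).erase u).card :=
          Finset.card_le_card hsub
      _ = (G.neighborFinset w).card - 1 := Finset.card_erase_of_mem hm
      _ ≤ d - 1 := by have := hdeg w; rw [← card_neighborFinset_eq_degree] at this; omega
  · rw [if_neg hw]
    have hdpw : dep G r (parent G r w) + 1 = dep G r w := dep_parent hG hw
    have hsub2 : Dset G r w u 1 ⊆ ((G.neighborFinset w).erase u).erase (parent G r w) := by
      intro z hz
      have h1 := hsub hz
      rw [mem_Dset] at hz
      rw [Finset.mem_erase]
      refine ⟨?_, h1⟩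
      intro h
      rw [h] at hz
      omega
    have hm2 : parent G r w ∈ (G.neighborFinset w).erase u := by
      rw [Finset.mem_erase, mem_neighborFinset]
      refine ⟨?_, adj_parent hG hw⟩
      intro h
      rw [h] at hdpw
      omega
    calc (Dset G r w u 1).card ≤ (((G.neighborFinset w).erase u).erase (parent G r w)).card :=
          Finset.card_le_card hsub2
      _ = ((G.neighborFinset w).erase u).card - 1 := Finset.card_erase_of_mem hm2
      _ = (G.neighborFinset w).card - 1 - 1 := by rw [Finset.card_erase_of_mem hm]
      _ ≤ d - 2 := by have := hdeg w; rw [← card_neighborFinset_eq_degree] at this; omega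

lemma card_Dset_succ (hG : G.IsTree) {d : ℕ} (hdeg : ∀ x : V, G.degree x ≤ d)
    (hdp : dep G r w + 1 = dep G r u) {b : ℕ} (hb : 1 ≤ b) :
    (Dset G r w u (b + 1)).card ≤ (d - 1) * (Dset G r w u b).card := by
  classical
  apply Finset.card_le_mul_card_image_of_maps_to (f := parent G r)
  · -- maps to
    intro z hz
    rw [mem_Dset] at hz ⊢
    obtain ⟨h1, h2, h3⟩ := hz
    have hzr : z ≠ r := by
      intro h
      rw [h, (dep_eq_zero_iff hG).mpr rfl] at h2
      omega
    have hdpz : dep G r (parent G r z) + 1 = dep G r z := dep_parent hG hzr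
    refine ⟨?_, by omega, ?_⟩
    · -- dist w (parent z) = b
      rcases claimC (r := r) hG (b + 1) z w (by rw [SimpleGraph.dist_comm]; exact h1)
        with hL | ⟨-, hR⟩
      · omega
      · rw [SimpleGraph.dist_comm] at hR; omega
    · -- dist u (parent z) = b + 1
      rcases claimC (r := r) hG (b + 2) z u (by rw [SimpleGraph.dist_comm]; exact h3)
        with hL | ⟨-, hR⟩
      · omega
      · rw [SimpleGraph.dist_comm] at hR; omega
  · -- fibres
    intro z' hz'
    rw [mem_Dset] at hz'
    have hz'r : z' ≠ r := by
      intro h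
      rw [h, (dep_eq_zero_iff hG).mpr rfl] at hz'
      omega
    have hdpz' : dep G r (parent G r z') + 1 = dep G r z' := dep_parent hG hz'r
    have hsub : (Dset G r w u (b + 1)).filter (fun z => parent G r z = z') ⊆
        (G.neighborFinset z').erase (parent G r z') := by
      intro z hz
      rw [Finset.mem_filter, mem_Dset] at hz
      obtain ⟨⟨h1, h2, h3⟩, h4⟩ := hz
      have hzr : z ≠ r := by
        intro h
        rw [h, (dep_eq_zero_iff hG).mpr rfl] at h2
        omega
      rw [Finset.mem_erase, mem_neighborFinset]
      constructor
      · intro h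
        rw [h] at h2
        omega
      · rw [← h4]
        exact (adj_parent hG hzr).symm
    have hm : parent G r z' ∈ G.neighborFinset z' := by
      rw [mem_neighborFinset]; exact adj_parent hG hz'r
    calc ((Dset G r w u (b + 1)).filter (fun z => parent G r z = z')).card
        ≤ ((G.neighborFinset z').erase (parent G r z')).card := Finset.card_le_card hsub
      _ = (G.neighborFinset z').card - 1 := Finset.card_erase_of_mem hm
      _ ≤ d - 1 := by have := hdeg z'; rw [← card_neighborFinset_eq_degree] at this; omega

lemma card_Dset (hG : G.IsTree) {d : ℕ} (hdeg : ∀ x : V, G.degree x ≤ d)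
    (hadj : G.Adj u w) (hdp : dep G r w + 1 = dep G r u) :
    ∀ b : ℕ, 1 ≤ b →
      (Dset G r w u b).card ≤ (if w = r then d - 1 else d - 2) * (d - 1) ^ (b - 1) := by
  intro b
  induction b with
  | zero => omega
  | succ b ih =>
    intro _
    rcases Nat.eq_zero_or_pos b with h0 | hb
    · subst h0
      simpa using card_Dset_one hG hdeg hadj hdp
    · calc (Dset G r w u (b + 1)).card ≤ (d - 1) * (Dset G r w u b).card :=
            card_Dset_succ hG hdeg hdp hb
        _ ≤ (d - 1) * ((if w = r then d - 1 else d - 2) * (d - 1) ^ (b - 1)) :=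
            Nat.mul_le_mul_left _ (ih hb)
        _ = (if w = r then d - 1 else d - 2) * (d - 1) ^ (b + 1 - 1) := by
            rw [Nat.mul_left_comm]
            congr 1
            rw [← pow_succ']
            congr 1
            omega


lemma cardMain (hG : G.IsTree) {d t : ℕ} (hdeg : ∀ x : V, G.degree x ≤ d)
    {v : V} (hdv : 1 ≤ dep G r v) :
    ((Set.toFinite {y : V | y ≠ v ∧ G.dist v y ≤ t ∧ dep G r y ≤ dep G r v}).toFinset).card ≤
      ∑ a ∈ Finset.Icc 1 (min (dep G r v) t), ∑ b ∈ Finset.Iic (min a (t - a)),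
        (if b = 0 then 1 else (if a = dep G r v then d - 1 else d - 2) * (d - 1) ^ (b - 1)) := by
  classical
  have hsub : (Set.toFinite {y : V | y ≠ v ∧ G.dist v y ≤ t ∧
      dep G r y ≤ dep G r v}).toFinset ⊆
      (Finset.Icc 1 (min (dep G r v) t)).biUnion (fun a =>
        (Finset.Iic (min a (t - a))).biUnion (fun b =>
          Dset G r (anc G r a v) (anc G r (a - 1) v) b)) := by
    intro y hy
    rw [Set.Finite.mem_toFinset, Set.mem_setOf_eq] at hy
    obtain ⟨hne, hdist, hdep⟩ := hy
    obtain ⟨a, b, ha1, hav, hba, habt, hd1, hd2, hd3⟩ :=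
      minimalMeet (r := r) hG hne hdep hdist
    rw [Finset.mem_biUnion]
    refine ⟨a, by rw [Finset.mem_Icc]; omega, ?_⟩
    rw [Finset.mem_biUnion]
    refine ⟨b, by rw [Finset.mem_Iic]; omega, ?_⟩
    rw [mem_Dset]
    exact ⟨hd1, by omega, hd3⟩
  calc ((Set.toFinite {y : V | y ≠ v ∧ G.dist v y ≤ t ∧
        dep G r y ≤ dep G r v}).toFinset).card
      ≤ _ := Finset.card_le_card hsub
    _ ≤ ∑ a ∈ Finset.Icc 1 (min (dep G r v) t),
          ((Finset.Iic (min a (t - a))).biUnion (fun b =>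
            Dset G r (anc G r a v) (anc G r (a - 1) v) b)).card :=
        Finset.card_biUnion_le
    _ ≤ _ := by
        apply Finset.sum_le_sum
        intro a ha
        rw [Finset.mem_Icc] at ha
        calc ((Finset.Iic (min a (t - a))).biUnion (fun b =>
              Dset G r (anc G r a v) (anc G r (a - 1) v) b)).card
            ≤ ∑ b ∈ Finset.Iic (min a (t - a)),
              (Dset G r (anc G r a v) (anc G r (a - 1) v) b).card :=
            Finset.card_biUnion_le
          _ ≤ _ := by
            apply Finset.sum_le_sum
            intro b _
            -- facts about the ancestors
            have hdanc : dep G r (anc G r a v) + a = dep G r v := dep_anc hG a v (by omega)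
            have hdanc' : dep G r (anc G r (a - 1) v) + (a - 1) = dep G r v :=
              dep_anc hG (a - 1) v (by omega)
            have hur : anc G r (a - 1) v ≠ r := by
              intro h
              have h0 : dep G r (anc G r (a - 1) v) = 0 := by
                rw [h]; exact (dep_eq_zero_iff hG).mpr rfl
              omega
            have hw : anc G r a v = parent G r (anc G r (a - 1) v) := by
              rw [← anc_succ']
              congr 1
              omega
            have hadj : G.Adj (anc G r (a - 1) v) (anc G r a v) := hw ▸ adj_parent hG hur
            have hdp : dep G r (anc G r a v) + 1 = dep G r (anc G r (a - 1) v) := by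
              rw [hw]; exact dep_parent hG hur
            have hiff : (anc G r a v = r) ↔ (a = dep G r v) := by
              constructor
              · intro h
                have h0 : dep G r (anc G r a v) = 0 := by
                  rw [h]; exact (dep_eq_zero_iff hG).mpr rfl
                omega
              · intro h
                have h0 : dep G r (anc G r a v) = 0 := by omega
                exact (dep_eq_zero_iff hG).mp h0
            rcases Nat.eq_zero_or_pos b with h0 | hb
            · subst h0
              rw [if_pos rfl]
              exact card_Dset_zero hG _ _
            · rw [if_neg (by omega)]
              have := card_Dset hG hdeg hadj hdp b hb
              by_cases hra : anc G r a v = r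
              · rw [if_pos hra] at this
                rw [if_pos (hiff.mp hra)]
                exact this
              · rw [if_neg hra] at this
                rw [if_neg (fun hh => hra (hiff.mpr hh))]
                exact this

end Count

section Arith

/-- geometric sum `1 + x + ... + x^(m-1)` -/
def gS (x m : ℕ) : ℕ := ∑ j ∈ Finset.range m, x ^ j

lemma gS_succ (x m : ℕ) : gS x (m + 1) = gS x m + x ^ m := Finset.sum_range_succ _ _

lemma gS_mul (x : ℕ) (hx : 1 ≤ x) (m : ℕ) : (x - 1) * gS x m + 1 = x ^ m := by
  induction m with
  | zero => simp [gS]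
  | succ m ih =>
    rw [gS_succ, Nat.mul_add, pow_succ]
    have h1 : (x - 1) * x ^ m + x ^ m = x ^ m * x := by
      have h2 : (x - 1) + 1 = x := by omega
      calc (x - 1) * x ^ m + x ^ m = ((x - 1) + 1) * x ^ m := by ring
        _ = x ^ m * x := by rw [h2]; ring
    omega

lemma gS_mono (x : ℕ) {m m' : ℕ} (h : m ≤ m') : gS x m ≤ gS x m' :=
  Finset.sum_le_sum_of_subset (Finset.range_subset_range.mpr h)

lemma gS_pos (x : ℕ) {m : ℕ} (hm : 1 ≤ m) : 1 ≤ gS x m := by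
  calc 1 = gS x 1 := by simp [gS]
    _ ≤ gS x m := gS_mono x hm

lemma gS_le_pow (x : ℕ) (hx : 2 ≤ x) (m : ℕ) : gS x m ≤ x ^ m := by
  have h := gS_mul x (by omega) m
  have : gS x m ≤ (x - 1) * gS x m := Nat.le_mul_of_pos_left _ (by omega)
  omega

lemma Iic_eq_range (m : ℕ) : Finset.Iic m = Finset.range (m + 1) := by
  ext a
  simp [Nat.lt_succ_iff]

/-- the inner sum, non-root case -/
lemma inner_sum_nonroot (x : ℕ) (hx : 2 ≤ x) (m : ℕ) :
    ∑ b ∈ Finset.Iic m, (if b = 0 then 1 else (x - 1) * x ^ (b - 1)) = x ^ m := by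
  rw [Iic_eq_range]
  induction m with
  | zero => simp
  | succ m ih =>
    rw [Finset.sum_range_succ, ih, if_neg (by omega)]
    have h1 : m + 1 - 1 = m := by omega
    rw [h1, pow_succ]
    have h2 : (x - 1) + 1 = x := by omega
    calc x ^ m + (x - 1) * x ^ m = ((x - 1) + 1) * x ^ m := by ring
      _ = x ^ m * x := by rw [h2]; ring

/-- the inner sum, root case -/
lemma inner_sum_root (x : ℕ) (hx : 2 ≤ x) (m : ℕ) :
    ∑ b ∈ Finset.Iic m, (if b = 0 then 1 else x * x ^ (b - 1)) = gS x (m + 1) := by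
  rw [Iic_eq_range]
  induction m with
  | zero => simp [gS]
  | succ m ih =>
    rw [Finset.sum_range_succ, ih, if_neg (by omega)]
    have h1 : m + 1 - 1 = m := by omega
    rw [h1, ← pow_succ']
    have e1 := gS_succ x m
    have e2 := gS_succ x (m + 1)
    omega

/-- outer sums -/
def PP (x t k : ℕ) : ℕ := ∑ a ∈ Finset.Icc 1 k, x ^ (min a (t - a))

lemma PP_lower (x t : ℕ) : ∀ s, ∑ a ∈ Finset.Ioc 0 s, x ^ (min a (t - a)) = PP x t s := by
  intro s
  rw [PP, ← Finset.Icc_add_one_left_eq_Ioc, zero_add]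

lemma PP_eval (x : ℕ) (hx : 2 ≤ x) (t s : ℕ) (hst : s ≤ t) (hs2 : t ≤ 2 * s + 1)
    (hs3 : 2 * s ≤ t) :
    PP x t t + 1 = gS x (s + 1) + gS x (t - s) := by
  have hsplit : (∑ a ∈ Finset.Ioc 0 s, x ^ (min a (t - a))) +
      (∑ a ∈ Finset.Ioc s t, x ^ (min a (t - a))) =
      ∑ a ∈ Finset.Ioc 0 t, x ^ (min a (t - a)) :=
    Finset.sum_Ioc_consecutive _ (Nat.zero_le s) hst
  have h1 : ∑ a ∈ Finset.Ioc 0 s, x ^ (min a (t - a)) = ∑ a ∈ Finset.Ioc 0 s, x ^ a := by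
    apply Finset.sum_congr rfl
    intro a ha
    rw [Finset.mem_Ioc] at ha
    rw [min_eq_left (by omega)]
  have h2 : ∑ a ∈ Finset.Ioc s t, x ^ (min a (t - a)) =
      ∑ a ∈ Finset.Ioc s t, x ^ (t - a) := by
    apply Finset.sum_congr rfl
    intro a ha
    rw [Finset.mem_Ioc] at ha
    rw [min_eq_right (by omega)]
  have h3 : ∑ a ∈ Finset.Ioc 0 s, x ^ a + 1 = gS x (s + 1) := by
    have : Finset.Ioc 0 s = (Finset.range (s + 1)).erase 0 := by
      ext a
      rw [Finset.mem_Ioc, Finset.mem_erase, Finset.mem_range]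
      omega
    rw [this, gS]
    have h4 := Finset.add_sum_erase (Finset.range (s + 1)) (fun j => x ^ j)
      (Finset.mem_range.mpr (by omega) : 0 ∈ Finset.range (s + 1))
    simp only [pow_zero] at h4
    omega
  have h5 : ∑ a ∈ Finset.Ioc s t, x ^ (t - a) = gS x (t - s) := by
    rw [gS]
    apply Finset.sum_nbij' (i := fun a => t - a) (j := fun b => t - b)
    · intro a ha
      rw [Finset.mem_Ioc] at ha
      rw [Finset.mem_range]
      omega
    · intro b hb
      rw [Finset.mem_range] at hb
      rw [Finset.mem_Ioc]
      omega
    · intro a ha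
      rw [Finset.mem_Ioc] at ha
      omega
    · intro b hb
      rw [Finset.mem_range] at hb
      omega
    · intro a _
      rfl
  have e1 := PP_lower x t s
  have e2 := PP_lower x t t
  omega

lemma PP_split (x t a₀ : ℕ) (hx : 2 ≤ x) (ha : 1 ≤ a₀) (hat : a₀ ≤ t) :
    PP x t (a₀ - 1) + x ^ (min a₀ (t - a₀)) + (t - a₀) ≤ PP x t t := by
  have hsplit : (∑ a ∈ Finset.Ioc 0 (a₀ - 1), x ^ (min a (t - a))) +
      (∑ a ∈ Finset.Ioc (a₀ - 1) t, x ^ (min a (t - a))) =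
      ∑ a ∈ Finset.Ioc 0 t, x ^ (min a (t - a)) :=
    Finset.sum_Ioc_consecutive _ (Nat.zero_le _) (by omega)
  have hsplit2 : (∑ a ∈ Finset.Ioc (a₀ - 1) a₀, x ^ (min a (t - a))) +
      (∑ a ∈ Finset.Ioc a₀ t, x ^ (min a (t - a))) =
      ∑ a ∈ Finset.Ioc (a₀ - 1) t, x ^ (min a (t - a)) :=
    Finset.sum_Ioc_consecutive _ (by omega) hat
  have h1 : ∑ a ∈ Finset.Ioc (a₀ - 1) a₀, x ^ (min a (t - a)) = x ^ (min a₀ (t - a₀)) := by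
    have : Finset.Ioc (a₀ - 1) a₀ = {a₀} := by
      ext a
      rw [Finset.mem_Ioc, Finset.mem_singleton]
      omega
    rw [this, Finset.sum_singleton]
  have h2 : t - a₀ ≤ ∑ a ∈ Finset.Ioc a₀ t, x ^ (min a (t - a)) := by
    calc t - a₀ = ∑ _a ∈ Finset.Ioc a₀ t, 1 := by
          rw [Finset.sum_const, Nat.card_Ioc, smul_eq_mul, mul_one]
      _ ≤ _ := Finset.sum_le_sum (fun a _ => Nat.one_le_pow _ _ (by omega))
  have e1 := PP_lower x t (a₀ - 1)
  have e2 := PP_lower x t t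
  omega


lemma tau'_odd (x s : ℕ) (hx : 2 ≤ x) : tau' (2 * s + 1) (x + 1) = (x + 1) * gS x (s + 1) := by
  rw [tau', if_neg (by rw [Nat.even_iff]; omega)]
  have h1 : x + 1 - 1 = x := by omega
  have h2 : (2 * s + 1 + 1) / 2 = s + 1 := by omega
  have h3 : x + 1 - 2 = x - 1 := by omega
  rw [h1, h2, h3]
  have hg := gS_mul x (by omega) (s + 1)
  have key : (x - 1) * ((x + 1) * gS x (s + 1)) + (x + 1) = (x + 1) * x ^ (s + 1) := by
    calc (x - 1) * ((x + 1) * gS x (s + 1)) + (x + 1)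
        = (x + 1) * ((x - 1) * gS x (s + 1) + 1) := by ring
      _ = (x + 1) * x ^ (s + 1) := by rw [hg]
  rw [← key, Nat.add_sub_cancel]
  exact Nat.mul_div_cancel_left _ (by omega)

lemma tau'_even (x s : ℕ) (hx : 2 ≤ x) (hs : 1 ≤ s) :
    tau' (2 * s) (x + 1) = 2 * x * gS x s + 1 := by
  rw [tau', if_pos (by rw [Nat.even_iff]; omega)]
  have h1 : x + 1 - 1 = x := by omega
  have h2 : 2 * s / 2 + 1 = s + 1 := by omega
  have h3 : x + 1 - 2 = x - 1 := by omega
  rw [h1, h2, h3]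
  have hg := gS_mul x (by omega) s
  have key : (x - 1) * (2 * x * gS x s + 1) + (x + 1) = 2 * x ^ (s + 1) := by
    have e1 : (x - 1) * (2 * x * gS x s + 1) + (x + 1)
        = 2 * x * ((x - 1) * gS x s) + ((x - 1) + (x + 1)) := by ring
    have e2 : (x - 1) + (x + 1) = 2 * x := by omega
    have e3 : 2 * x * ((x - 1) * gS x s) + 2 * x = 2 * x * ((x - 1) * gS x s + 1) := by ring
    have e4 : 2 * x * x ^ s = 2 * x ^ (s + 1) := by rw [pow_succ]; ring
    rw [e1, e2, e3, hg, e4]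
  rw [← key, Nat.add_sub_cancel]
  exact Nat.mul_div_cancel_left _ (by omega)

lemma PP_le_tau (x t : ℕ) (hx : 2 ≤ x) (ht : 1 ≤ t) : PP x t t + 1 ≤ tau' t (x + 1) := by
  rcases Nat.even_or_odd t with he | ho
  · obtain ⟨s, hs⟩ := he
    have ht2 : t = 2 * s := by omega
    have hs1 : 1 ≤ s := by omega
    have hPP := PP_eval x hx t s (by omega) (by omega) (by omega)
    have hts : t - s = s := by omega
    rw [hts] at hPP
    rw [ht2, tau'_even x s hx hs1]
    have hgs := gS_succ x s
    have hxs := gS_mul x (by omega) s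
    have h1 : (x - 1) + 2 ≤ 2 * x := by omega
    have h2 : ((x - 1) + 2) * gS x s ≤ 2 * x * gS x s := Nat.mul_le_mul_right _ h1
    have h3 : ((x - 1) + 2) * gS x s = (x - 1) * gS x s + 2 * gS x s := by ring
    rw [ht2] at hPP
    omega
  · obtain ⟨s, hs⟩ := ho
    have hPP := PP_eval x hx t s (by omega) (by omega) (by omega)
    have hts : t - s = s + 1 := by omega
    rw [hts] at hPP
    rw [hs, tau'_odd x s hx]
    rw [hs] at hPP
    have h2 : 2 * gS x (s + 1) ≤ (x + 1) * gS x (s + 1) := Nat.mul_le_mul_right _ (by omega)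
    omega

lemma PPg_le_tau (x t : ℕ) (hx : 2 ≤ x) (ht : 1 ≤ t) :
    PP x t t + gS x (t / 2) ≤ tau' t (x + 1) := by
  rcases Nat.even_or_odd t with he | ho
  · obtain ⟨s, hs⟩ := he
    have ht2 : t = 2 * s := by omega
    have hs1 : 1 ≤ s := by omega
    have hPP := PP_eval x hx t s (by omega) (by omega) (by omega)
    have hts : t - s = s := by omega
    rw [hts] at hPP
    have htd : t / 2 = s := by omega
    rw [ht2, tau'_even x s hx hs1]
    rw [ht2] at hPP htd
    rw [htd]
    have hgs := gS_succ x s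
    have hxs := gS_mul x (by omega) s
    have h1 : 3 + (x - 1) ≤ 2 * x := by omega
    have h2 : (3 + (x - 1)) * gS x s ≤ 2 * x * gS x s := Nat.mul_le_mul_right _ h1
    have h3 : (3 + (x - 1)) * gS x s = 3 * gS x s + (x - 1) * gS x s := by ring
    omega
  · obtain ⟨s, hs⟩ := ho
    have hPP := PP_eval x hx t s (by omega) (by omega) (by omega)
    have hts : t - s = s + 1 := by omega
    rw [hts] at hPP
    have htd : t / 2 = s := by omega
    rw [hs, tau'_odd x s hx]
    rw [hs] at hPP htd
    rw [htd]
    have hmono : gS x s ≤ gS x (s + 1) := gS_mono x (by omega)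
    have h3 : 3 * gS x (s + 1) ≤ (x + 1) * gS x (s + 1) := Nat.mul_le_mul_right _ (by omega)
    omega

lemma arith_main (x t a₀ : ℕ) (hx : 2 ≤ x) (ht : 1 ≤ t) (ha : 1 ≤ a₀) :
    (∑ a ∈ Finset.Icc 1 (min a₀ t), ∑ b ∈ Finset.Iic (min a (t - a)),
      (if b = 0 then 1 else (if a = a₀ then x else x - 1) * x ^ (b - 1))) <
      tau' t (x + 1) := by
  have hinner_ne : ∀ a : ℕ, a ≠ a₀ →
      (∑ b ∈ Finset.Iic (min a (t - a)),
        (if b = 0 then 1 else (if a = a₀ then x else x - 1) * x ^ (b - 1))) =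
      x ^ (min a (t - a)) := by
    intro a haa
    rw [← inner_sum_nonroot x hx (min a (t - a))]
    apply Finset.sum_congr rfl
    intro b _
    rcases Nat.eq_zero_or_pos b with h0 | hb
    · simp [h0]
    · have hb' : b ≠ 0 := by omega
      simp [hb', haa]
  have hinner_eq :
      (∑ b ∈ Finset.Iic (min a₀ (t - a₀)),
        (if b = 0 then 1 else (if a₀ = a₀ then x else x - 1) * x ^ (b - 1))) =
      gS x (min a₀ (t - a₀) + 1) := by
    rw [← inner_sum_root x hx (min a₀ (t - a₀))]
    apply Finset.sum_congr rfl
    intro b _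
    rcases Nat.eq_zero_or_pos b with h0 | hb
    · simp [h0]
    · have hb' : b ≠ 0 := by omega
      simp [hb']
  by_cases hcase : t < a₀
  · -- the root is out of reach
    have hmin : min a₀ t = t := min_eq_right (by omega)
    have hS : (∑ a ∈ Finset.Icc 1 (min a₀ t), ∑ b ∈ Finset.Iic (min a (t - a)),
        (if b = 0 then 1 else (if a = a₀ then x else x - 1) * x ^ (b - 1))) = PP x t t := by
      rw [hmin, PP]
      apply Finset.sum_congr rfl
      intro a haI
      rw [Finset.mem_Icc] at haI
      exact hinner_ne a (by omega)
    rw [hS]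
    have := PP_le_tau x t hx ht
    omega
  · -- a₀ ≤ t
    push_neg at hcase
    have hmin : min a₀ t = a₀ := min_eq_left hcase
    -- split the outer sum at a₀
    have hsplit : (∑ a ∈ Finset.Ioc 0 (a₀ - 1), ∑ b ∈ Finset.Iic (min a (t - a)),
        (if b = 0 then 1 else (if a = a₀ then x else x - 1) * x ^ (b - 1))) +
        (∑ a ∈ Finset.Ioc (a₀ - 1) a₀, ∑ b ∈ Finset.Iic (min a (t - a)),
        (if b = 0 then 1 else (if a = a₀ then x else x - 1) * x ^ (b - 1))) =
        ∑ a ∈ Finset.Ioc 0 a₀, ∑ b ∈ Finset.Iic (min a (t - a)),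
        (if b = 0 then 1 else (if a = a₀ then x else x - 1) * x ^ (b - 1)) :=
      Finset.sum_Ioc_consecutive _ (by omega) (by omega)
    have hIoc : Finset.Icc 1 (min a₀ t) = Finset.Ioc 0 a₀ := by
      rw [hmin, ← Finset.Icc_add_one_left_eq_Ioc, zero_add]
    have hsingle : Finset.Ioc (a₀ - 1) a₀ = {a₀} := by
      ext a
      rw [Finset.mem_Ioc, Finset.mem_singleton]
      omega
    have hfirst : (∑ a ∈ Finset.Ioc 0 (a₀ - 1), ∑ b ∈ Finset.Iic (min a (t - a)),
        (if b = 0 then 1 else (if a = a₀ then x else x - 1) * x ^ (b - 1))) =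
        PP x t (a₀ - 1) := by
      rw [← PP_lower]
      apply Finset.sum_congr rfl
      intro a haI
      rw [Finset.mem_Ioc] at haI
      exact hinner_ne a (by omega)
    have hlast : (∑ a ∈ Finset.Ioc (a₀ - 1) a₀, ∑ b ∈ Finset.Iic (min a (t - a)),
        (if b = 0 then 1 else (if a = a₀ then x else x - 1) * x ^ (b - 1))) =
        gS x (min a₀ (t - a₀) + 1) := by
      rw [hsingle, Finset.sum_singleton]
      exact hinner_eq
    rw [hIoc, ← hsplit, hfirst, hlast]
    -- now the numeric estimate
    have hPs := PP_split x t a₀ hx ha hcase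
    have hgm := gS_succ x (min a₀ (t - a₀))
    rcases Nat.eq_or_lt_of_le hcase with heq | hlt
    · -- a₀ = t
      have hm0 : min a₀ (t - a₀) = 0 := by omega
      have := PP_le_tau x t hx ht
      rw [hm0] at hgm hPs ⊢
      have hg1 : gS x (0 + 1) = 1 := by simp [gS]
      have hx0 : x ^ 0 = 1 := pow_zero x
      omega
    · -- a₀ < t
      have hmm : min a₀ (t - a₀) ≤ t / 2 := by omega
      have hmono : gS x (min a₀ (t - a₀)) ≤ gS x (t / 2) := gS_mono x hmm
      have hmaster := PPg_le_tau x t hx ht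
      have hpow : 1 ≤ x ^ (min a₀ (t - a₀)) := Nat.one_le_pow _ _ (by omega)
      omega

end Arith

section LineGraph

variable {V : Type*} {G : SimpleGraph V}

lemma dist_le_one_of_mem (e : Sym2 V) (he : e ∈ G.edgeSet) {x y : V}
    (hx : x ∈ e) (hy : y ∈ e) : G.dist x y ≤ 1 := by
  induction e using Sym2.ind with
  | _ a b =>
    have hab : G.Adj a b := G.mem_edgeSet.mp he
    rw [Sym2.mem_iff] at hx hy
    rcases hx with rfl | rfl <;> rcases hy with rfl | rfl
    · simp [SimpleGraph.dist_self]
    · rw [dist_eq_one_iff_adj.mpr hab]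
    · rw [dist_eq_one_iff_adj.mpr hab.symm]
    · simp [SimpleGraph.dist_self]

lemma lineWalk (hG : G.Connected) {e f : G.edgeSet} (p : G.lineGraph.Walk e f) :
    ∀ {x y : V}, x ∈ (e : Sym2 V) → y ∈ (f : Sym2 V) → G.dist x y ≤ p.length + 1 := by
  induction p with
  | nil =>
    intro x y hx hy
    rename_i e'
    calc G.dist x y ≤ 1 := dist_le_one_of_mem (e' : Sym2 V) e'.2 hx hy
      _ ≤ _ := by simp
  | cons h q ih =>
    intro x y hx hy
    rename_i e' g' _
    obtain ⟨-, w, hw1, hw2⟩ := (lineGraph_adj_iff_exists).mp h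
    have h1 : G.dist x w ≤ 1 := dist_le_one_of_mem (e' : Sym2 V) e'.2 hx hw1
    have h2 : G.dist w y ≤ q.length + 1 := ih hw2 hy
    have h3 : G.dist x y ≤ G.dist x w + G.dist w y := hG.dist_triangle
    rw [Walk.length_cons]
    omega

lemma conflict_dist (hG : G.Connected) {t : ℕ} (ht : 1 ≤ t) {e f : G.edgeSet}
    (h : G.lineGraph.edist e f ≤ ((t - 1 : ℕ) : ℕ∞)) {x y : V}
    (hx : x ∈ (e : Sym2 V)) (hy : y ∈ (f : Sym2 V)) : G.dist x y ≤ t := by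
  have hne : G.lineGraph.edist e f ≠ ⊤ := ne_top_of_le_ne_top (ENat.coe_ne_top _) h
  obtain ⟨p, hp⟩ := exists_walk_of_edist_ne_top hne
  have hlen : (p.length : ℕ∞) ≤ ((t - 1 : ℕ) : ℕ∞) := by rw [hp]; exact h
  have hlen' : p.length ≤ t - 1 := by exact_mod_cast hlen
  have := lineWalk hG p hx hy
  omega

end LineGraph

end DTC

/-- Every finite tree of maximum degree at most `d ≥ 3` has distance-`t`
chromatic index at most `τ'_t(d)` (for `t ≥ 1`). -/
theorem stmt_3 {V : Type*} [Fintype V] (G : SimpleGraph V) [DecidableRel G.Adj]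
    (t d : ℕ) (ht : 1 ≤ t) (hd : 3 ≤ d) (hG : G.IsTree)
    (hdeg : ∀ v, G.degree v ≤ d) :
    DistEdgeColorable G t (tau' t d) := by
  classical
  obtain ⟨x, hxd⟩ : ∃ x, d = x + 1 := ⟨d - 1, by omega⟩
  have hx2 : 2 ≤ x := by omega
  have hD1 : d - 1 = x := by omega
  have hD2 : d - 2 = x - 1 := by omega
  have hVne : Nonempty V := hG.isConnected.nonempty
  set r : V := Classical.arbitrary V with hrdef
  -- the lower endpoint of each edge
  have hbot : ∀ e : G.edgeSet, ∃ p : V × V, (e : Sym2 V) = s(p.1, p.2) ∧ G.Adj p.1 p.2 ∧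
      DTC.dep G r p.2 + 1 = DTC.dep G r p.1 := by
    rintro ⟨e, he⟩
    revert he
    induction e using Sym2.ind with
    | _ a b =>
      intro he
      have hab : G.Adj a b := G.mem_edgeSet.mp he
      rcases DTC.adj_dep (r := r) hG hab with h1 | h2
      · exact ⟨(b, a), Sym2.eq_swap, hab.symm, h1⟩
      · exact ⟨(a, b), rfl, hab, h2⟩
  choose bp hbp1 hbp2 hbp3 using hbot
  set bot : G.edgeSet → V := fun e => (bp e).1 with hbotdef
  have hparent : ∀ e, (bp e).2 = DTC.parent G r (bot e) :=
    fun e => DTC.parent_eq hG (hbp2 e) (hbp3 e)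
  have hval : ∀ e : G.edgeSet, (e : Sym2 V) = s(bot e, DTC.parent G r (bot e)) := by
    intro e
    rw [hbp1 e, hparent e]
  have hbotmem : ∀ e : G.edgeSet, bot e ∈ (e : Sym2 V) := by
    intro e
    rw [hval e]
    exact Sym2.mem_mk_left _ _
  have hbotinj : ∀ e f : G.edgeSet, bot e = bot f → e = f := by
    intro e f h
    apply Subtype.ext
    have h1 := hval e
    have h2 := hval f
    rw [h] at h1
    rw [h1, h2]
  have hdep_pos : ∀ e : G.edgeSet, 1 ≤ DTC.dep G r (bot e) := by
    intro e
    have h1 := hbp3 e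
    have h2 : bot e = (bp e).1 := rfl
    rw [h2]
    omega
  set n := tau' t d with hn
  have npos : 1 ≤ n := by
    have := DTC.PP_le_tau x t hx2 ht
    rw [hn, hxd]
    omega
  -- the key per-edge counting bound
  have hedge : ∀ (e : G.edgeSet) (F : Finset G.edgeSet),
      (∀ f ∈ F, f ≠ e ∧ G.lineGraph.edist f e ≤ ((t - 1 : ℕ) : ℕ∞) ∧
        DTC.dep G r (bot f) ≤ DTC.dep G r (bot e)) → F.card < n := by
    intro e F hF
    have hsub : ∀ f ∈ F, bot f ∈ (Set.toFinite {y : V | y ≠ bot e ∧ G.dist (bot e) y ≤ t ∧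
        DTC.dep G r y ≤ DTC.dep G r (bot e)}).toFinset := by
      intro f hf
      obtain ⟨hne, hdist, hdep⟩ := hF f hf
      rw [Set.Finite.mem_toFinset, Set.mem_setOf_eq]
      refine ⟨fun h => hne (hbotinj f e h), ?_, hdep⟩
      have := DTC.conflict_dist hG.isConnected ht hdist (hbotmem f) (hbotmem e)
      rwa [SimpleGraph.dist_comm] at this
    have hinj : Set.InjOn bot F := fun f₁ _ f₂ _ h => hbotinj f₁ f₂ h
    have hc1 : F.card ≤ ((Set.toFinite {y : V | y ≠ bot e ∧ G.dist (bot e) y ≤ t ∧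
        DTC.dep G r y ≤ DTC.dep G r (bot e)}).toFinset).card :=
      Finset.card_le_card_of_injOn bot hsub hinj
    have hc2 := DTC.cardMain (r := r) (t := t) hG hdeg (hdep_pos e)
    have harith := DTC.arith_main x t (DTC.dep G r (bot e)) hx2 ht (hdep_pos e)
    rw [← hxd] at harith
    simp only [hD1, hD2] at hc2
    rw [hn]
    exact lt_of_le_of_lt (le_trans (le_trans hc1 hc2) (le_refl _)) harith
  -- greedy colouring
  set m := Fintype.card G.edgeSet with hm
  set ε : Fin m ≃ G.edgeSet := (Fintype.equivFin G.edgeSet).symm with hε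
  set key : G.edgeSet → ℕ := fun e => DTC.dep G r (bot e) with hkey
  set π : Equiv.Perm (Fin m) := Tuple.sort (key ∘ ε) with hπ
  set σ : Fin m ≃ G.edgeSet := π.trans ε with hσ
  have hmono : Monotone (fun i => key (σ i)) := Tuple.monotone_sort (key ∘ ε)
  have hgreedy : ∀ k, k ≤ m → ∃ c : Fin m → Fin n, ∀ i j : Fin m,
      (i : ℕ) < (j : ℕ) → (j : ℕ) < k →
      (σ i ≠ σ j ∧ G.lineGraph.edist (σ i) (σ j) ≤ ((t - 1 : ℕ) : ℕ∞)) → c i ≠ c j := by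
    intro k
    induction k with
    | zero =>
      intro _
      exact ⟨fun _ => ⟨0, npos⟩, fun i j _ hj _ => absurd hj (by omega)⟩
    | succ k ih =>
      intro hk1
      obtain ⟨c, hc⟩ := ih (by omega)
      have hkm : k < m := by omega
      set jk : Fin m := ⟨k, hkm⟩ with hjk
      have hjkval : (jk : ℕ) = k := rfl
      set F : Finset (Fin m) := Finset.univ.filter
        (fun i => (i : ℕ) < k ∧ σ i ≠ σ jk ∧
          G.lineGraph.edist (σ i) (σ jk) ≤ ((t - 1 : ℕ) : ℕ∞)) with hFdef
      have hFprop : ∀ f ∈ F.image (fun i => σ i), f ≠ σ jk ∧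
          G.lineGraph.edist f (σ jk) ≤ ((t - 1 : ℕ) : ℕ∞) ∧
          DTC.dep G r (bot f) ≤ DTC.dep G r (bot (σ jk)) := by
        intro f hf
        rw [Finset.mem_image] at hf
        obtain ⟨i, hi, rfl⟩ := hf
        rw [hFdef, Finset.mem_filter] at hi
        obtain ⟨-, hik, hne, hdist⟩ := hi
        refine ⟨hne, hdist, ?_⟩
        have : key (σ i) ≤ key (σ jk) := hmono (by
          show i ≤ jk
          rw [Fin.le_def]
          omega)
        rw [hkey] at this
        exact this
      have hFcard : (F.image (fun i => σ i)).card < n := hedge (σ jk) _ hFprop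
      have hFcard2 : F.card < n := by
        rw [← Finset.card_image_of_injective F σ.injective] at *
        exact hFcard
      obtain ⟨col, hcol⟩ : ∃ col : Fin n, col ∉ F.image c := by
        by_contra hcon
        push_neg at hcon
        have hsub : (Finset.univ : Finset (Fin n)) ⊆ F.image c := fun col _ => hcon col
        have h1 := Finset.card_le_card hsub
        have h2 := Finset.card_image_le (f := c) (s := F)
        rw [Finset.card_univ, Fintype.card_fin] at h1
        omega
      refine ⟨Function.update c jk col, ?_⟩
      intro i j hij hjk1 hconf
      rcases Nat.lt_or_ge (j : ℕ) k with hlt | hge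
      · rw [Function.update_of_ne (Fin.ne_of_val_ne (by omega : (i : ℕ) ≠ (jk : ℕ))),
          Function.update_of_ne (Fin.ne_of_val_ne (by omega : (j : ℕ) ≠ (jk : ℕ)))]
        exact hc i j hij hlt hconf
      · have hjval : (j : ℕ) = k := by omega
        have hj : j = jk := Fin.ext (by rw [hjval, hjkval])
        rw [hj] at hconf ⊢
        rw [Function.update_of_ne (Fin.ne_of_val_ne (by omega : (i : ℕ) ≠ (jk : ℕ))),
          Function.update_self]
        intro heq
        apply hcol
        rw [← heq]
        apply Finset.mem_image_of_mem
        rw [hFdef, Finset.mem_filter]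
        exact ⟨Finset.mem_univ _, by omega, hconf.1, hconf.2⟩
  obtain ⟨c, hc⟩ := hgreedy m le_rfl
  refine ⟨fun e => c (σ.symm e), ?_⟩
  intro e f hef hdist
  have hσe : σ (σ.symm e) = e := Equiv.apply_symm_apply σ e
  have hσf : σ (σ.symm f) = f := Equiv.apply_symm_apply σ f
  rcases lt_trichotomy ((σ.symm e : Fin m) : ℕ) ((σ.symm f : Fin m) : ℕ) with hlt | heq | hgt
  · exact hc _ _ hlt (Fin.is_lt _) ⟨by rw [hσe, hσf]; exact hef,
      by rw [hσe, hσf]; exact hdist⟩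
  · exfalso
    have : σ.symm e = σ.symm f := Fin.ext heq
    exact hef (by rw [← hσe, ← hσf, this])
  · have := hc _ _ hgt (Fin.is_lt _) ⟨by rw [hσe, hσf]; exact hef.symm,
      by rw [hσe, hσf, SimpleGraph.edist_comm]; exact hdist⟩
    exact this.symm
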